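/- For a smooth function φ : ℝ → ℝ, the error of the look-around quadrature rule satisfies ∫_{a-h/2}^{a+h/2} φ(t) dt - (h/24)(φ(a-h) + 22φ(a) + φ(a+h)) = O(h^5) as h → 0; more precisely, if φ is C^4 with ‖φ⁗‖_∞ ≤ C on ℝ, then the error is bounded by a constant (depending only on C) times h^5. -/

import Mathlib

open Set

noncomputable def taylorP (φ : ℝ → ℝ) (a t : ℝ) : ℝ :=
  φ a + deriv φ a * (t - a) + iteratedDeriv 2 φ a * (t - a) ^ 2 / 2
    + iteratedDeriv 3 φ a * (t - a) ^ 3 / 6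

lemma iterDW (φ : ℝ → ℝ) (hφ : ContDiff ℝ 4 φ) {a b : ℝ} (hab : a < b)
    {k : ℕ} (hk : k ≤ 4) {x : ℝ} (hx : x ∈ Icc a b) :
    iteratedDerivWithin k φ (Icc a b) x = iteratedDeriv k φ x := by
  have H : HasFTaylorSeriesUpToOn 4 φ (ftaylorSeries ℝ φ) (Icc a b) := by
    rw [← ftaylorSeriesWithin_univ]
    exact ((hφ.contDiffOn).ftaylorSeriesWithin uniqueDiffOn_univ).mono (subset_univ _)
  have h2 := H.eq_iteratedFDerivWithin_of_uniqueDiffOn (by exact_mod_cast hk)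
    (uniqueDiffOn_Icc hab) hx
  rw [iteratedDerivWithin_eq_iteratedFDerivWithin, ← h2, iteratedDeriv_eq_iteratedFDeriv]
  rfl


lemma right_bound {C : ℝ} (hC : 0 ≤ C) (φ : ℝ → ℝ) (hφ : ContDiff ℝ 4 φ)
    (hbd : ∀ t : ℝ, |iteratedDeriv 4 φ t| ≤ C) (a : ℝ) {t : ℝ} (ht : a ≤ t) :
    |φ t - taylorP φ a t| ≤ C * (t - a) ^ 4 / 6 := by
  rcases eq_or_lt_of_le ht with rfl | hat
  · simp [taylorP]
  · have hfOn : ContDiffOn ℝ (3 + 1 : ℕ) φ (Icc a t) := by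
      exact_mod_cast hφ.contDiffOn
    have hC' : ∀ y ∈ Icc a t, ‖iteratedDerivWithin (3 + 1) φ (Icc a t) y‖ ≤ C := by
      intro y hy
      rw [show (3 + 1) = 4 from rfl, iterDW φ hφ hat le_rfl hy, Real.norm_eq_abs]
      exact hbd y
    have key := taylor_mean_remainder_bound (n := 3) ht hfOn (right_mem_Icc.2 ht) hC'
    have hT : taylorWithinEval φ 3 (Icc a t) a t = taylorP φ a t := by
      rw [taylor_within_apply]
      rw [Finset.sum_range_succ, Finset.sum_range_succ, Finset.sum_range_succ,
        Finset.sum_range_succ, Finset.sum_range_zero]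
      have hmem : a ∈ Icc a t := left_mem_Icc.2 ht
      rw [iterDW φ hφ hat (by norm_num) hmem, iterDW φ hφ hat (by norm_num) hmem,
        iterDW φ hφ hat (by norm_num) hmem, iterDW φ hφ hat (by norm_num) hmem]
      simp [taylorP, iteratedDeriv_one, Nat.factorial, smul_eq_mul]
      ring
    rw [Real.norm_eq_abs, hT] at key
    calc |φ t - taylorP φ a t| ≤ C * (t - a) ^ 4 / ((3).factorial : ℝ) := key
    _ = C * (t - a) ^ 4 / 6 := by norm_num [Nat.factorial]


lemma all_bound {C : ℝ} (hC : 0 ≤ C) (φ : ℝ → ℝ) (hφ : ContDiff ℝ 4 φ)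
    (hbd : ∀ t : ℝ, |iteratedDeriv 4 φ t| ≤ C) (a t : ℝ) :
    |φ t - taylorP φ a t| ≤ C * (t - a) ^ 4 / 6 := by
  rcases le_total a t with ht | ht
  · exact right_bound hC φ hφ hbd a ht
  · set ψ : ℝ → ℝ := fun u => φ (2 * a - u) with hψdef
    have hψ : ContDiff ℝ 4 ψ := hφ.comp (contDiff_const.sub contDiff_id)
    have hIter : ∀ (k : ℕ) (u : ℝ),
        iteratedDeriv k ψ u = (-1 : ℝ) ^ k * iteratedDeriv k φ (2 * a - u) := by
      intro k u
      have e1 : ψ = fun z => (fun x => φ (-x)) (z + -(2 * a)) := by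
        funext z; simp [hψdef]; ring_nf
      rw [e1, iteratedDeriv_comp_add_const k (fun x => φ (-x)) (-(2 * a))]
      simp only []
      rw [iteratedDeriv_comp_neg k φ (u + -(2 * a)), smul_eq_mul]
      ring_nf
    have hbdψ : ∀ u : ℝ, |iteratedDeriv 4 ψ u| ≤ C := by
      intro u
      rw [hIter 4 u, show ((-1:ℝ))^4 = 1 by norm_num, one_mul]
      exact hbd (2 * a - u)
    have hta : a ≤ 2 * a - t := by linarith
    have key := right_bound hC ψ hψ hbdψ a hta
    have hψt : ψ (2 * a - t) = φ t := by simp only [hψdef]; ring_nf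
    have hP : taylorP ψ a (2 * a - t) = taylorP φ a t := by
      have h0 : ψ a = φ a := by simp [hψdef]; ring_nf
      have h1 : deriv ψ a = - deriv φ a := by
        have := hIter 1 a
        rw [iteratedDeriv_one, iteratedDeriv_one] at this
        rw [this]; ring_nf
      have h2 := hIter 2 a
      have h3 := hIter 3 a
      rw [taylorP, taylorP, h0, h1, h2, h3]
      ring_nf
    rw [hψt, hP] at key
    calc |φ t - taylorP φ a t| ≤ C * (2 * a - t - a) ^ 4 / 6 := key
    _ = C * (t - a) ^ 4 / 6 := by ring_nf


lemma taylorP_cont (φ : ℝ → ℝ) (a : ℝ) : Continuous (taylorP φ a) := by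
  unfold taylorP; fun_prop

lemma exactness (φ : ℝ → ℝ) (a h : ℝ) :
    (∫ t in (a - h / 2)..(a + h / 2), taylorP φ a t)
      = (h / 24) * (taylorP φ a (a - h) + 22 * taylorP φ a a + taylorP φ a (a + h)) := by
  set c0 := φ a
  set c1 := deriv φ a
  set c2 := iteratedDeriv 2 φ a
  set c3 := iteratedDeriv 3 φ a
  have hderiv : ∀ x ∈ uIcc (a - h / 2) (a + h / 2),
      HasDerivAt (fun t => c0 * (t - a) + c1 * (t - a) ^ 2 / 2 + c2 * (t - a) ^ 3 / 6
        + c3 * (t - a) ^ 4 / 24) (taylorP φ a x) x := by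
    intro x _
    have h1 : HasDerivAt (fun t : ℝ => t - a) 1 x := (hasDerivAt_id x).sub_const a
    have p2 : HasDerivAt (fun t : ℝ => (t - a) ^ 2) (2 * (x - a) ^ 1 * 1) x := h1.pow 2
    have p3 : HasDerivAt (fun t : ℝ => (t - a) ^ 3) (3 * (x - a) ^ 2 * 1) x := h1.pow 3
    have p4 : HasDerivAt (fun t : ℝ => (t - a) ^ 4) (4 * (x - a) ^ 3 * 1) x := h1.pow 4
    have := (((h1.const_mul c0).add ((p2.const_mul c1).div_const 2)).add
      ((p3.const_mul c2).div_const 6)).add ((p4.const_mul c3).div_const 24)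
    refine this.congr_deriv ?_
    unfold taylorP
    ring
  have hint : IntervalIntegrable (taylorP φ a) MeasureTheory.volume (a - h / 2) (a + h / 2) :=
    (taylorP_cont φ a).intervalIntegrable _ _
  rw [intervalIntegral.integral_eq_sub_of_hasDerivAt hderiv hint]
  unfold taylorP
  ring


/-- If `φ` is `C⁴` with `‖φ⁗‖_∞ ≤ C`, then the error of the look-around quadrature
rule is bounded by a constant depending only on `C` times `h^5`. -/
theorem lookAround_quadrature_error_order_five (C : ℝ) (hC : 0 ≤ C) :
    ∃ K : ℝ, 0 ≤ K ∧ ∀ (φ : ℝ → ℝ), ContDiff ℝ 4 φ →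
      (∀ t : ℝ, |iteratedDeriv 4 φ t| ≤ C) →
      ∀ (a : ℝ) (h : ℝ), 0 < h →
        |(∫ t in (a - h / 2)..(a + h / 2), φ t)
            - (h / 24) * (φ (a - h) + 22 * φ a + φ (a + h))| ≤ K * h ^ 5 := by
  refine ⟨C, hC, fun φ hφ hbd a h hh => ?_⟩
  have hle : a - h / 2 ≤ a + h / 2 := by linarith
  have hφi : IntervalIntegrable φ MeasureTheory.volume (a - h / 2) (a + h / 2) :=
    hφ.continuous.intervalIntegrable _ _
  have hPi : IntervalIntegrable (taylorP φ a) MeasureTheory.volume (a - h / 2) (a + h / 2) :=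
    (taylorP_cont φ a).intervalIntegrable _ _
  have hsplit : (∫ t in (a - h / 2)..(a + h / 2), φ t)
      = (∫ t in (a - h / 2)..(a + h / 2), taylorP φ a t)
        + ∫ t in (a - h / 2)..(a + h / 2), (φ t - taylorP φ a t) := by
    rw [intervalIntegral.integral_sub hφi hPi]; ring
  -- bound on the integral of the remainder
  have hIbound : |∫ t in (a - h / 2)..(a + h / 2), (φ t - taylorP φ a t)|
      ≤ (C * (h / 2) ^ 4 / 6) * h := by
    have := intervalIntegral.norm_integral_le_of_norm_le_const
      (C := C * (h / 2) ^ 4 / 6) (a := a - h / 2) (b := a + h / 2)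
      (f := fun t => φ t - taylorP φ a t) ?_
    · rw [Real.norm_eq_abs] at this
      calc |∫ t in (a - h / 2)..(a + h / 2), (φ t - taylorP φ a t)|
          ≤ C * (h / 2) ^ 4 / 6 * |a + h / 2 - (a - h / 2)| := this
        _ = C * (h / 2) ^ 4 / 6 * h := by
            rw [show a + h / 2 - (a - h / 2) = h by ring, abs_of_pos hh]
    · intro x hx
      rw [uIoc_of_le hle] at hx
      have hx1 : |x - a| ≤ h / 2 := by
        rw [abs_le]; constructor <;> [linarith [hx.1]; linarith [hx.2]]
      have hx2 : (x - a) ^ 4 ≤ (h / 2) ^ 4 := by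
        calc (x - a) ^ 4 = |x - a| ^ 4 := by rw [← abs_pow, abs_of_nonneg (by positivity)]
          _ ≤ (h / 2) ^ 4 := by
              apply pow_le_pow_left₀ (abs_nonneg _) hx1
      rw [Real.norm_eq_abs]
      calc |φ x - taylorP φ a x| ≤ C * (x - a) ^ 4 / 6 := all_bound hC φ hφ hbd a x
        _ ≤ C * (h / 2) ^ 4 / 6 := by gcongr
  have hRa : φ a - taylorP φ a a = 0 := by simp [taylorP]
  have hRm : |φ (a - h) - taylorP φ a (a - h)| ≤ C * h ^ 4 / 6 := by
    have := all_bound hC φ hφ hbd a (a - h)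
    rwa [show (a - h - a) ^ 4 = h ^ 4 by ring] at this
  have hRp : |φ (a + h) - taylorP φ a (a + h)| ≤ C * h ^ 4 / 6 := by
    have := all_bound hC φ hφ hbd a (a + h)
    rwa [show (a + h - a) ^ 4 = h ^ 4 by ring] at this
  have hkey : (∫ t in (a - h / 2)..(a + h / 2), φ t)
      - (h / 24) * (φ (a - h) + 22 * φ a + φ (a + h))
      = (∫ t in (a - h / 2)..(a + h / 2), (φ t - taylorP φ a t))
        - (h / 24) * ((φ (a - h) - taylorP φ a (a - h)) + 22 * (φ a - taylorP φ a a)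
            + (φ (a + h) - taylorP φ a (a + h))) := by
    rw [hsplit, exactness φ a h]; ring
  rw [hkey]
  have habs : |(h / 24) * ((φ (a - h) - taylorP φ a (a - h)) + 22 * (φ a - taylorP φ a a)
      + (φ (a + h) - taylorP φ a (a + h)))| ≤ (h / 24) * (2 * (C * h ^ 4 / 6)) := by
    rw [abs_mul, abs_of_pos (by linarith : (0:ℝ) < h / 24)]
    have : |(φ (a - h) - taylorP φ a (a - h)) + 22 * (φ a - taylorP φ a a)
        + (φ (a + h) - taylorP φ a (a + h))| ≤ 2 * (C * h ^ 4 / 6) := by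
      rw [hRa]
      calc |(φ (a - h) - taylorP φ a (a - h)) + 22 * 0 + (φ (a + h) - taylorP φ a (a + h))|
          = |(φ (a - h) - taylorP φ a (a - h)) + (φ (a + h) - taylorP φ a (a + h))| := by
            ring_nf
        _ ≤ |φ (a - h) - taylorP φ a (a - h)| + |φ (a + h) - taylorP φ a (a + h)| := abs_add_le _ _
        _ ≤ 2 * (C * h ^ 4 / 6) := by linarith
    gcongr
  calc |(∫ t in (a - h / 2)..(a + h / 2), (φ t - taylorP φ a t))
        - (h / 24) * ((φ (a - h) - taylorP φ a (a - h)) + 22 * (φ a - taylorP φ a a)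
            + (φ (a + h) - taylorP φ a (a + h)))|
      ≤ |∫ t in (a - h / 2)..(a + h / 2), (φ t - taylorP φ a t)|
        + |(h / 24) * ((φ (a - h) - taylorP φ a (a - h)) + 22 * (φ a - taylorP φ a a)
            + (φ (a + h) - taylorP φ a (a + h)))| := abs_sub _ _
    _ ≤ (C * (h / 2) ^ 4 / 6) * h + (h / 24) * (2 * (C * h ^ 4 / 6)) := by linarith
    _ ≤ C * h ^ 5 := by nlinarith [pow_pos hh 5, mul_nonneg hC (le_of_lt (pow_pos hh 5))]
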